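/- For all n, x ∈ ℤ and t ≥ 0, the series ∑_{y ≥ x} F_n(y,t) converges absolutely and F_{n+1}(x,t) = ∑_{y ≥ x} F_n(y,t). -/

import Mathlib

open MeasureTheory Real Set

noncomputable def iciEquiv (x : ℤ) : ℕ ≃ ↥(Set.Ici x) where
  toFun k := ⟨x + k, le_add_of_nonneg_right (Int.natCast_nonneg k)⟩
  invFun y := (y.1 - x).toNat
  left_inv k := by simp
  right_inv y := by
    ext
    simp only
    rw [Int.toNat_of_nonneg (sub_nonneg.mpr y.2)]
    ring

lemma hasSum_pw (n x : ℤ) {w : ℂ} (hw : 1 < ‖w‖) :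
    HasSum (fun y : ↥(Set.Ici x) => w ^ (n - (y : ℤ) - 1))
      (-(w ^ (n - x) * (1 - w)⁻¹)) := by
  have hw0 : w ≠ 0 := by
    intro h; rw [h] at hw; simp at hw; linarith
  have h1w : (1 : ℂ) - w ≠ 0 := by
    intro h
    have : w = 1 := by linear_combination -h
    rw [this] at hw; simp at hw
  have hinv : ‖w⁻¹‖ < 1 := by
    rw [norm_inv]
    exact inv_lt_one_of_one_lt₀ hw
  have hg := (hasSum_geometric_of_norm_lt_one hinv).mul_left (w ^ (n - x - 1))
  rw [← (iciEquiv x).hasSum_iff]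
  convert hg using 1
  · rfl
  · funext k
    simp only [Function.comp, iciEquiv, Equiv.coe_fn_mk]
    rw [← zpow_natCast w⁻¹ k, inv_zpow, ← zpow_neg, ← zpow_add₀ hw0]
    congr 1
    ring
  · have h1 : w ^ (n - x) = w ^ (n - x - 1) * w := by
      rw [← zpow_add_one₀ hw0]; congr 1; ring
    have h2 : ((1 : ℂ) - w⁻¹) = (w - 1) * w⁻¹ := by field_simp
    have h3 : (w - 1)⁻¹ = -(1 - w)⁻¹ := by rw [neg_inv, neg_sub]
    rw [h1, h2, mul_inv, inv_inv, h3]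
    ring

/-- `F n x t R = ((-1)^n/(2πi)) ∮_{|w|=R} dw w^(n-x-1) (1-w)^(-n) e^(t(w-1))`,
the Schütz functions of the TASEP transition probability, with the contour a
positively oriented circle of radius `R` centered at the origin. -/
noncomputable def F (n x : ℤ) (t : ℝ) (R : ℝ) : ℂ :=
  ((-1 : ℂ) ^ n / (2 * ↑Real.pi * Complex.I)) *
    ∮ w in C(0, R), w ^ (n - x - 1) * (1 - w) ^ (-n) * Complex.exp (↑t * (w - 1))

/-- For all `n, x ∈ ℤ` and `t ≥ 0`, the series `∑_{y ≥ x} F_n(y,t)` converges absolutely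
and `F_{n+1}(x,t) = ∑_{y ≥ x} F_n(y,t)` (with the contour a circle of any radius `R > 1`). -/

theorem statement8 (n x : ℤ) (t : ℝ) (ht : 0 ≤ t) (R : ℝ) (hR : 1 < R) :
    Summable (fun y : ↥(Set.Ici x) => F n (↑y) t R) ∧
      F (n + 1) x t R = ∑' y : ↥(Set.Ici x), F n (↑y) t R := by
  have hR0 : (0:ℝ) < R := by linarith
  set c : ℝ → ℂ := circleMap 0 R with hc
  have hnorm : ∀ θ, ‖c θ‖ = R := fun θ => by
    simp [hc, norm_circleMap_zero, abs_of_pos hR0]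
  have hcw : ∀ θ, 1 < ‖c θ‖ := fun θ => by rw [hnorm]; exact hR
  have hc0 : ∀ θ, c θ ≠ 0 := fun θ => by
    intro h; have := hcw θ; rw [h] at this; norm_num at this
  have h1c : ∀ θ, (1:ℂ) - c θ ≠ 0 := fun θ => by
    intro h
    have h1 : c θ = 1 := by linear_combination -h
    have h2 := hcw θ; rw [h1] at h2; norm_num at h2
  set g : ℝ → ℂ := fun θ => (1 - c θ) ^ (-n) * Complex.exp (↑t * (c θ - 1)) with hg
  have hccont : Continuous c := continuous_circleMap 0 R
  have hgcont : Continuous g := by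
    apply Continuous.mul
    · exact (continuous_const.sub hccont).zpow₀ _ (fun θ => Or.inl (h1c θ))
    · exact Complex.continuous_exp.comp (by fun_prop)
  obtain ⟨C, hC⟩ : ∃ C, ∀ θ ∈ Set.Icc 0 (2*π), ‖g θ‖ ≤ C :=
    isCompact_Icc.exists_bound_of_continuousOn hgcont.continuousOn
  set μ := volume.restrict (Set.Ioc (0:ℝ) (2*π)) with hμ
  set f : ↥(Set.Ici x) → ℝ → ℂ :=
    fun y θ => deriv c θ • (c θ ^ (n - (y:ℤ) - 1) * g θ) with hf
  set T : ℝ → ℂ := fun θ => deriv c θ • (-(c θ ^ (n - x) * (1 - c θ)⁻¹ * g θ)) with hT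
  have hderiv : ∀ θ, deriv c θ = c θ * Complex.I := fun θ => deriv_circleMap 0 R θ
  -- summability of the bound
  have hsumR : Summable (fun y : ↥(Set.Ici x) => R ^ (n - (y:ℤ) - 1)) := by
    have hs := (hasSum_pw n x (w := (R:ℂ)) (by
      simpa [Complex.norm_real, Real.norm_eq_abs, abs_of_pos hR0] using hR)).summable
    have := (summable_norm_iff.mpr hs)
    simpa [norm_zpow, Complex.norm_real, abs_of_pos hR0] using this
  have hboundsum : Summable (fun y : ↥(Set.Ici x) => R * (R ^ (n - (y:ℤ) - 1) * C)) :=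
    (hsumR.mul_right C).mul_left R
  -- dominated convergence
  have key : HasSum (fun y : ↥(Set.Ici x) => ∫ θ, f y θ ∂μ) (∫ θ, T θ ∂μ) := by
    apply MeasureTheory.hasSum_integral_of_dominated_convergence
      (bound := fun (y : ↥(Set.Ici x)) (_ : ℝ) => R * (R ^ (n - (y:ℤ) - 1) * C))
    · intro y
      refine Continuous.aestronglyMeasurable ?_
      exact ((hccont.mul continuous_const).congr (fun θ => (hderiv θ).symm)).smul
        ((hccont.zpow₀ _ (fun θ => Or.inl (hc0 θ))).mul hgcont)
    · intro y
      filter_upwards [ae_restrict_mem measurableSet_Ioc] with θ hθ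
      rw [hf]
      simp only
      rw [norm_smul, hderiv, norm_mul, Complex.norm_I, mul_one, norm_mul, norm_zpow,
        hnorm]
      gcongr
      exact hC θ (Set.Ioc_subset_Icc_self hθ)
    · exact Filter.Eventually.of_forall (fun θ => hboundsum)
    · exact (integrableOn_const measure_Ioc_lt_top.ne)
    · refine Filter.Eventually.of_forall (fun θ => ?_)
      have := ((hasSum_pw n x (hcw θ)).mul_right (g θ)).const_smul (deriv c θ)
      convert this using 2
      · rfl
      ring
  -- identify the integrals with circle integrals
  have hFy : ∀ y : ↥(Set.Ici x),
      (∮ w in C(0, R), w ^ (n - (y:ℤ) - 1) * (1 - w) ^ (-n) * Complex.exp (↑t * (w - 1)))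
        = ∫ θ, f y θ ∂μ := by
    intro y
    rw [circleIntegral, intervalIntegral.integral_of_le (by positivity)]
    simp only [hf, hg, mul_assoc]
    rfl
  have hTint : (∫ θ, T θ ∂μ) =
      -∮ w in C(0, R), w ^ (n + 1 - x - 1) * (1 - w) ^ (-(n+1)) * Complex.exp (↑t * (w - 1)) := by
    rw [circleIntegral, intervalIntegral.integral_of_le (by positivity), ← integral_neg]
    congr 1
    funext θ
    rw [hT]
    simp only [smul_neg]
    congr 2
    rw [hg]
    simp only
    rw [show -(n+1) = -n + (-1) by ring, zpow_add₀ (h1c θ), zpow_neg_one,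
        show n + 1 - x - 1 = n - x by ring]
    ring
  have key2 := key.mul_left ((-1:ℂ)^n / (2*(π:ℂ)*Complex.I))
  have hfun : (fun y : ↥(Set.Ici x) => ((-1:ℂ)^n / (2*(π:ℂ)*Complex.I)) * ∫ θ, f y θ ∂μ)
      = fun y : ↥(Set.Ici x) => F n (↑y) t R := by
    funext y
    rw [F, hFy y]
  rw [hfun] at key2
  refine ⟨key2.summable, ?_⟩
  rw [key2.tsum_eq, hTint, F,
    show ((-1:ℂ))^(n+1) = -((-1:ℂ))^n by rw [zpow_add_one₀ (by norm_num : (-1:ℂ) ≠ 0)]; ring]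
  ring
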